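/- Let (φ^k) be a sequence in a compact set Φ^0 ⊆ ℝ^d satisfying D̂(φ^{k+1}) + D_ψ(φ^{k+1},φ^k) ≤ D̂(φ^k), with D̂ and D_ψ continuous, D_ψ ≥ 0, and (D̂(φ^k))_k convergent. Then there exist points φ̃, φ̄ ∈ Φ^0 which are limits of subsequences (φ^{N(k)}) and (φ^{N(k)-1}) respectively, and for these limits D_ψ(φ̃,φ̄) = 0. -/

import Mathlib

open Filter

/-- In a compact set, under the proximal decrease inequality and convergence of
`(D̂(φ^k))`, there are subsequential limits `φ̃` of `(φ^{N(k)})` and `φ̄` of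
`(φ^{N(k)-1})` with `D_ψ(φ̃, φ̄) = 0`. -/
theorem exists_subsequential_limits_with_vanishing_proximal_term
    {d : ℕ} (Φ0 : Set (Fin d → ℝ)) (hΦ0 : IsCompact Φ0)
    (Dhat : (Fin d → ℝ) → ℝ) (hDcont : Continuous Dhat)
    (Dψ : (Fin d → ℝ) → (Fin d → ℝ) → ℝ)
    (hψcont : Continuous fun p : (Fin d → ℝ) × (Fin d → ℝ) => Dψ p.1 p.2)
    (hψnonneg : ∀ φ φ', 0 ≤ Dψ φ φ')
    (φ : ℕ → (Fin d → ℝ)) (hmem : ∀ k, φ k ∈ Φ0)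
    (hineq : ∀ k, Dhat (φ (k+1)) + Dψ (φ (k+1)) (φ k) ≤ Dhat (φ k))
    (L : ℝ) (hconv : Tendsto (fun k => Dhat (φ k)) atTop (nhds L)) :
    ∃ φtilde ∈ Φ0, ∃ φbar ∈ Φ0, ∃ N : ℕ → ℕ, StrictMono N ∧ (∀ k, 1 ≤ N k) ∧
      Tendsto (fun k => φ (N k)) atTop (nhds φtilde) ∧
      Tendsto (fun k => φ (N k - 1)) atTop (nhds φbar) ∧
      Dψ φtilde φbar = 0 := by
  -- the pair sequence lives in the compact set Φ0 ×ˢ Φ0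
  obtain ⟨q, hq, σ, hσ, hlim⟩ :=
    (hΦ0.prod hΦ0).tendsto_subseq
      (x := fun k => ((φ (k+1), φ k) : (Fin d → ℝ) × (Fin d → ℝ)))
      (fun k => ⟨hmem (k+1), hmem k⟩)
  refine ⟨q.1, hq.1, q.2, hq.2, fun k => σ k + 1, ?_, fun k => Nat.le_add_left 1 _, ?_, ?_, ?_⟩
  · exact fun a b hab => by simpa using hσ hab
  · exact ((continuous_fst.tendsto q).comp hlim)
  · simpa [Function.comp_def] using ((continuous_snd.tendsto q).comp hlim)
  · -- Dψ (φ (k+1)) (φ k) → 0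
    have h0 : Tendsto (fun k => Dψ (φ (k+1)) (φ k)) atTop (nhds 0) := by
      have h1 : Tendsto (fun k => Dhat (φ k) - Dhat (φ (k+1))) atTop (nhds 0) := by
        have := hconv.sub (hconv.comp (tendsto_add_atTop_nat 1))
        simpa using this
      refine squeeze_zero (fun k => hψnonneg _ _) (fun k => ?_) h1
      linarith [hineq k]
    have h2 : Tendsto (fun k => Dψ (φ (σ k + 1)) (φ (σ k))) atTop (nhds 0) :=
      h0.comp hσ.tendsto_atTop
    have h3 : Tendsto (fun k => Dψ (φ (σ k + 1)) (φ (σ k))) atTop (nhds (Dψ q.1 q.2)) :=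
      (hψcont.tendsto q).comp hlim
    exact tendsto_nhds_unique h3 h2
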